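/- Let k̃ = min{ k ∈ ℕ : s_k(a) > c - 1 }. Then the embedding dimension of G_{a,b}(c) equals k̃. -/

import Mathlib

/-- `sF a k = Σ_{i=0}^{k-1} a^i` (so `sF a 0 = 0`). -/
def sF (a k : ℕ) : ℕ := ∑ i ∈ Finset.range k, a ^ i

/-- `tF a b c k = a^k * c + b * sF a k`. -/
def tF (a b c k : ℕ) : ℕ := a ^ k * c + b * sF a k

/-- A θ_{a,b}-semigroup: contains 0, closed under addition, and closed under
`x ↦ a*x + b` on nonzero elements. -/
def IsThetaSG (a b : ℕ) (S : Set ℕ) : Prop :=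
  0 ∈ S ∧ (∀ x ∈ S, ∀ y ∈ S, x + y ∈ S) ∧ ∀ y ∈ S, y ≠ 0 → a * y + b ∈ S

/-- `Gset a b c` : the smallest θ_{a,b}-semigroup containing `c`. -/
def Gset (a b c : ℕ) : Set ℕ := ⋂₀ {S : Set ℕ | IsThetaSG a b S ∧ c ∈ S}

/-- `Hmon a b c` : additive submonoid generated by the `tF a b c k`. -/
def Hmon (a b c : ℕ) : AddSubmonoid ℕ :=
  AddSubmonoid.closure {x | ∃ k, x = tF a b c k}

/-- `{j_i}_{i=1}^k` is `a`-reduced. -/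
def AReduced (a k : ℕ) (j : ℕ → ℕ) : Prop :=
  (∀ i, 1 ≤ i → i ≤ k → j i ≤ a) ∧ j k ≠ 0 ∧
  ∀ m, 1 ≤ m → m ≤ k → j m = a → ∀ i, 1 ≤ i → i < m → j i = 0

open AddSubmonoid Finset

lemma sF_succ (a k : ℕ) : sF a (k + 1) = a * sF a k + 1 := by
  simp only [sF, Finset.sum_range_succ', pow_succ, pow_zero, ← Finset.sum_mul]
  ring

lemma sF_succ' (a k : ℕ) : sF a (k + 1) = sF a k + a ^ k := by
  simp [sF, Finset.sum_range_succ]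

lemma sF_mono (a : ℕ) : Monotone (sF a) := fun _ _ h =>
  Finset.sum_le_sum_of_subset (Finset.range_subset_range.2 h)

lemma le_sF (a : ℕ) (ha : 0 < a) (k : ℕ) : k ≤ sF a k := by
  induction k with
  | zero => simp [sF]
  | succ k ih =>
    have : 0 < a ^ k := pow_pos ha k
    rw [sF_succ']; omega

lemma pow_eq_sF (a : ℕ) (ha : 0 < a) (k : ℕ) : a ^ k = (a - 1) * sF a k + 1 := by
  obtain ⟨d, rfl⟩ : ∃ d, a = d + 1 := ⟨a - 1, by omega⟩
  induction k with
  | zero => simp [sF]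
  | succ k ih =>
    rw [pow_succ, ih, sF_succ]
    ring_nf
    omega

lemma tF_succ (a b c k : ℕ) : tF a b c (k + 1) = a * tF a b c k + b := by
  simp only [tF, sF_succ, pow_succ]
  ring

lemma tF_zero (a b c : ℕ) : tF a b c 0 = c := by simp [tF, sF]

lemma c_le_tF (a b c : ℕ) (ha : 0 < a) (k : ℕ) : c ≤ tF a b c k := by
  have h1 : 0 < a ^ k := pow_pos ha k
  have : c ≤ a ^ k * c := Nat.le_mul_of_pos_left c h1
  unfold tF; omega

lemma tF_strictMono (a b c : ℕ) (ha : 0 < a) (hb : 0 < b) : StrictMono (tF a b c) := by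
  apply strictMono_nat_of_lt_succ
  intro k
  rw [tF_succ]
  have : tF a b c k ≤ a * tF a b c k := Nat.le_mul_of_pos_left _ ha
  omega

/-- Core representation lemma: any `a^K * c + b * Y` with `Y ≤ sF a K - 1` lies in the
monoid generated by `tF a b c i`, `i < K`. -/
lemma rep (a b c : ℕ) (ha : 0 < a) :
    ∀ K, 1 ≤ K → ∀ Y, Y + 1 ≤ sF a K →
      a ^ K * c + b * Y ∈ AddSubmonoid.closure {x | ∃ i < K, x = tF a b c i} := by
  intro K
  induction K with
  | zero => omega
  | succ K ih =>
    intro _ Y hY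
    rcases Nat.eq_zero_or_pos K with rfl | hK'
    · have h1 : sF a (0 + 1) = 1 := by simp [sF]
      have hY0 : Y = 0 := by omega
      subst hY0
      have hc : (c : ℕ) ∈ AddSubmonoid.closure {x | ∃ i < 0 + 1, x = tF a b c i} :=
        subset_closure ⟨0, by omega, (tF_zero a b c).symm⟩
      have := nsmul_mem hc a
      simpa [nsmul_eq_mul] using this
    · have hS : 1 ≤ sF a K := le_trans hK' (le_sF a ha K)
      have hYa : Y ≤ a * sF a K := by have := sF_succ a K; omega
      set S := sF a K with hSdef
      set m := Y / S with hmdef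
      set ρ := Y % S with hρdef
      have hm : m * S + ρ = Y := by rw [hmdef, hρdef, Nat.mul_comm]; exact Nat.div_add_mod Y S
      have hρS : ρ < S := Nat.mod_lt _ hS
      have hmule : m * S ≤ Y := by omega
      have hma : m ≤ a := by
        by_contra h
        push_neg at h
        have : (a + 1) * S ≤ m * S := Nat.mul_le_mul_right _ (by omega)
        nlinarith
      have hsub : AddSubmonoid.closure {x | ∃ i < K, x = tF a b c i} ≤
          AddSubmonoid.closure {x | ∃ i < K + 1, x = tF a b c i} :=
        closure_mono (by rintro x ⟨i, hi, hx⟩; exact ⟨i, by omega, hx⟩)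
      have htK : tF a b c K ∈ AddSubmonoid.closure {x | ∃ i < K + 1, x = tF a b c i} :=
        subset_closure ⟨K, by omega, rfl⟩
      have hblock : ∀ y, y + 1 ≤ S →
          a ^ K * c + b * y ∈ AddSubmonoid.closure {x | ∃ i < K + 1, x = tF a b c i} :=
        fun y hy => hsub (ih hK' y hy)
      have htKval : tF a b c K = a ^ K * c + b * S := rfl
      rcases Nat.eq_zero_or_pos ρ with hρ0 | hρ1
      · -- Y = m * S
        obtain ⟨d, hd⟩ : ∃ d, a = m + d := ⟨a - m, by omega⟩
        have e1 : m * tF a b c K ∈ AddSubmonoid.closure {x | ∃ i < K + 1, x = tF a b c i} := by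
          simpa [nsmul_eq_mul] using nsmul_mem htK m
        have e2 : d * (a ^ K * c + b * 0) ∈
            AddSubmonoid.closure {x | ∃ i < K + 1, x = tF a b c i} := by
          simpa [nsmul_eq_mul] using nsmul_mem (hblock 0 hS) d
        have key : a ^ (K + 1) * c + b * Y =
            m * tF a b c K + d * (a ^ K * c + b * 0) := by
          rw [htKval, pow_succ, hd, ← hm, hρ0]
          ring
        rw [key]; exact add_mem e1 e2
      · have hmlt : m < a := by
          by_contra h
          push_neg at h
          have : a * S ≤ m * S := Nat.mul_le_mul_right _ h
          omega
        obtain ⟨d, hd⟩ : ∃ d, a = m + 1 + d := ⟨a - m - 1, by omega⟩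
        have e1 : m * tF a b c K ∈ AddSubmonoid.closure {x | ∃ i < K + 1, x = tF a b c i} := by
          simpa [nsmul_eq_mul] using nsmul_mem htK m
        have e2 : a ^ K * c + b * ρ ∈
            AddSubmonoid.closure {x | ∃ i < K + 1, x = tF a b c i} := hblock ρ (by omega)
        have e3 : d * (a ^ K * c + b * 0) ∈
            AddSubmonoid.closure {x | ∃ i < K + 1, x = tF a b c i} := by
          simpa [nsmul_eq_mul] using nsmul_mem (hblock 0 hS) d
        have key : a ^ (K + 1) * c + b * Y =
            m * tF a b c K + ((a ^ K * c + b * ρ) + d * (a ^ K * c + b * 0)) := by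
          rw [htKval, pow_succ, hd, ← hm]
          ring
        rw [key]; exact add_mem e1 (add_mem e2 e3)

/-- All `tF a b c k` lie in the monoid generated by the first `kt` of them. -/
lemma tmem (a b c kt : ℕ) (ha : 0 < a) (hc : 2 ≤ c)
    (hkt1 : 1 ≤ kt) (hktc : c ≤ sF a kt) :
    ∀ k, tF a b c k ∈ AddSubmonoid.closure {x | ∃ i < kt, x = tF a b c i} := by
  intro k
  induction k using Nat.strong_induction_on with
  | _ k ih =>
    by_cases hk : k < kt
    · exact subset_closure ⟨k, hk, rfl⟩
    · push_neg at hk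
      have hsk : c ≤ sF a k := le_trans hktc (sF_mono a hk)
      have h1k : 1 ≤ k := le_trans hkt1 hk
      have hY : (sF a k - c) + 1 ≤ sF a k := by omega
      have hrep := rep a b c ha k h1k (sF a k - c) hY
      have hbc : b * c ∈ AddSubmonoid.closure {x | ∃ i < kt, x = tF a b c i} := by
        have := nsmul_mem (ih 0 (by omega)) b
        simpa [nsmul_eq_mul, tF_zero] using this
      have hle : AddSubmonoid.closure {x | ∃ i < k, x = tF a b c i} ≤
          AddSubmonoid.closure {x | ∃ i < kt, x = tF a b c i} :=
        closure_le.2 (by rintro x ⟨i, hi, rfl⟩; exact ih i hi)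
      have key : tF a b c k = (a ^ k * c + b * (sF a k - c)) + b * c := by
        have h1 : b * (sF a k - c) + b * c = b * sF a k := by
          rw [← Nat.mul_add, Nat.sub_add_cancel hsk]
        unfold tF; omega
      rw [key]
      exact add_mem (hle hrep) hbc

lemma tF_mem_theta (a b c : ℕ) (ha : 0 < a) (hc : 2 ≤ c) (S : Set ℕ)
    (hS : IsThetaSG a b S) (hcS : c ∈ S) : ∀ k, tF a b c k ∈ S := by
  intro k
  induction k with
  | zero => simpa [tF_zero] using hcS
  | succ k ih =>
    rw [tF_succ]
    exact hS.2.2 _ ih (by have := c_le_tF a b c ha k; omega)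

lemma exists_gen (a b c x : ℕ) (hx : x ∈ Hmon a b c) :
    x ≠ 0 → ∃ k y, y ∈ Hmon a b c ∧ x = tF a b c k + y := by
  induction hx using AddSubmonoid.closure_induction with
  | mem z hz =>
    intro _
    obtain ⟨k, rfl⟩ := hz
    exact ⟨k, 0, zero_mem _, (add_zero _).symm⟩
  | zero => intro h; exact absurd rfl h
  | add x y hxm hym ihx ihy =>
    intro hxy
    rcases Nat.eq_zero_or_pos x with rfl | hx0
    · obtain ⟨k, z, hz, hzy⟩ := ihy (by simpa using hxy)
      exact ⟨k, z, hz, by simpa using hzy⟩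
    · obtain ⟨k, y', hy', hyx⟩ := ihx hx0.ne'
      exact ⟨k, y' + y, add_mem hy' hym, by rw [hyx, add_assoc]⟩

lemma gset_eq (a b c : ℕ) (ha : 0 < a) (hb : 0 < b) (hc : 2 ≤ c) :
    Gset a b c = ↑(Hmon a b c) := by
  apply subset_antisymm
  · -- Gset ⊆ Hmon: Hmon is a θ-semigroup containing c
    apply Set.sInter_subset_of_mem
    refine ⟨⟨zero_mem _, fun x hx y hy => add_mem hx hy, ?_⟩, ?_⟩
    · intro y hy hy0
      obtain ⟨k, z, hz, rfl⟩ := exists_gen a b c y hy hy0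
      have key : a * (tF a b c k + z) + b = tF a b c (k + 1) + a * z := by
        rw [tF_succ]; ring
      rw [key]
      exact add_mem (subset_closure ⟨k + 1, rfl⟩)
        (by simpa [nsmul_eq_mul] using nsmul_mem hz a)
    · exact subset_closure ⟨0, (tF_zero a b c).symm⟩
  · -- Hmon ⊆ every θ-semigroup containing c
    intro x hx
    intro S hS
    obtain ⟨⟨h0, hadd, hθ⟩, hcS⟩ := hS
    let S' : AddSubmonoid ℕ :=
      { carrier := S
        add_mem' := fun {u v} hu hv => hadd u hu v hv
        zero_mem' := h0 }
    have : Hmon a b c ≤ S' :=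
      closure_le.2 (by rintro z ⟨k, rfl⟩; exact tF_mem_theta a b c ha hc S ⟨h0, hadd, hθ⟩ hcS k)
    exact this hx

lemma pad_sum (t : ℕ → ℕ) (K K' : ℕ) (h : K ≤ K') (j : ℕ → ℕ) :
    ∑ k ∈ Finset.range K, j k * t k =
      ∑ k ∈ Finset.range K', (if k < K then j k else 0) * t k := by
  rw [← Finset.sum_subset (Finset.range_subset_range.2 h) (fun x _ hx => by
      have hxK : ¬ x < K := by simpa using hx
      simp [hxK])]
  exact Finset.sum_congr rfl fun k hk => by simp [Finset.mem_range.1 hk]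

lemma hmon_sum (a b c x : ℕ) (hx : x ∈ Hmon a b c) :
    ∃ K, ∃ j : ℕ → ℕ, x = ∑ k ∈ Finset.range K, j k * tF a b c k := by
  induction hx using AddSubmonoid.closure_induction with
  | mem z hz =>
    obtain ⟨k, rfl⟩ := hz
    refine ⟨k + 1, fun i => if i = k then 1 else 0, ?_⟩
    rw [Finset.sum_eq_single k]
    · simp
    · intro i _ hik; simp [hik]
    · intro h; exact absurd (Finset.self_mem_range_succ k) h
  | zero => exact ⟨0, fun _ => 0, by simp⟩
  | add x y hxm hym ihx ihy =>
    obtain ⟨K₁, j1, rfl⟩ := ihx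
    obtain ⟨K₂, j2, rfl⟩ := ihy
    refine ⟨max K₁ K₂, fun k => (if k < K₁ then j1 k else 0) + (if k < K₂ then j2 k else 0), ?_⟩
    rw [pad_sum (tF a b c) K₁ (max K₁ K₂) (le_max_left _ _) j1,
      pad_sum (tF a b c) K₂ (max K₁ K₂) (le_max_right _ _) j2,
      ← Finset.sum_add_distrib]
    exact Finset.sum_congr rfl fun k _ => by ring

/-- Indecomposability of `tF a b c i` when `sF a i ≤ c - 1`. -/
lemma indec (a b c : ℕ) (ha : 0 < a) (hb : 0 < b) (hc : 2 ≤ c)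
    (hcop : Nat.gcd b c = 1) (i : ℕ) (hsi : sF a i ≤ c - 1) :
    ¬ ∃ y ∈ Hmon a b c, ∃ z ∈ Hmon a b c, y ≠ 0 ∧ z ≠ 0 ∧ tF a b c i = y + z := by
  rintro ⟨y, hy, z, hz, hy0, hz0, heq⟩
  obtain ⟨K₁, j1, rfl⟩ := hmon_sum a b c y hy
  obtain ⟨K₂, j2, rfl⟩ := hmon_sum a b c z hz
  set K := max K₁ K₂ with hK
  set j : ℕ → ℕ := fun k => (if k < K₁ then j1 k else 0) + (if k < K₂ then j2 k else 0) with hj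
  have hsum : tF a b c i = ∑ k ∈ Finset.range K, j k * tF a b c k := by
    rw [heq, pad_sum (tF a b c) K₁ K (le_max_left _ _) j1,
      pad_sum (tF a b c) K₂ K (le_max_right _ _) j2, ← Finset.sum_add_distrib]
    exact Finset.sum_congr rfl fun k _ => by simp only [hj]; ring
  set J := ∑ k ∈ Finset.range K, j k with hJdef
  have hJ1 : 1 ≤ ∑ k ∈ Finset.range K₁, j1 k := by
    by_contra h
    push_neg at h
    have h0 : ∀ k ∈ Finset.range K₁, j1 k = 0 := by
      have := Nat.lt_one_iff.1 h
      intro k hk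
      exact (Finset.sum_eq_zero_iff.1 this) k hk
    exact hy0 (Finset.sum_eq_zero fun k hk => by rw [h0 k hk, zero_mul])
  have hJ2 : 1 ≤ ∑ k ∈ Finset.range K₂, j2 k := by
    by_contra h
    push_neg at h
    have h0 : ∀ k ∈ Finset.range K₂, j2 k = 0 := by
      have := Nat.lt_one_iff.1 h
      intro k hk
      exact (Finset.sum_eq_zero_iff.1 this) k hk
    exact hz0 (Finset.sum_eq_zero fun k hk => by rw [h0 k hk, zero_mul])
  have hJ : 2 ≤ J := by
    have e1 : ∑ k ∈ Finset.range K₁, j1 k =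
        ∑ k ∈ Finset.range K, (if k < K₁ then j1 k else 0) := by
      simpa using pad_sum (fun _ => 1) K₁ K (le_max_left _ _) j1
    have e2 : ∑ k ∈ Finset.range K₂, j2 k =
        ∑ k ∈ Finset.range K, (if k < K₂ then j2 k else 0) := by
      simpa using pad_sum (fun _ => 1) K₂ K (le_max_right _ _) j2
    have : J = (∑ k ∈ Finset.range K₁, j1 k) + ∑ k ∈ Finset.range K₂, j2 k := by
      rw [e1, e2, hJdef, ← Finset.sum_add_distrib]
    omega
  set X := ∑ k ∈ Finset.range K, j k * a ^ k with hX
  set Yv := ∑ k ∈ Finset.range K, j k * sF a k with hYv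
  have hXY : ∑ k ∈ Finset.range K, j k * tF a b c k = c * X + b * Yv := by
    rw [hX, hYv, Finset.mul_sum, Finset.mul_sum, ← Finset.sum_add_distrib]
    exact Finset.sum_congr rfl fun k _ => by unfold tF; ring
  have hXJ : X = (a - 1) * Yv + J := by
    rw [hX, hYv, hJdef, Finset.mul_sum, ← Finset.sum_add_distrib]
    exact Finset.sum_congr rfl fun k _ => by rw [pow_eq_sF a ha k]; ring
  have hpi : a ^ i = (a - 1) * sF a i + 1 := pow_eq_sF a ha i
  have hmain : c * a ^ i + b * sF a i = c * X + b * Yv := by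
    rw [← hXY, ← hsum]; unfold tF; ring
  rcases le_or_gt (sF a i) Yv with hYc | hYc
  · -- Yv ≥ s_i forces X ≥ a^i + 1, too big
    have hXbig : a ^ i + 1 ≤ X := by
      have h1 : (a - 1) * sF a i ≤ (a - 1) * Yv := Nat.mul_le_mul_left _ hYc
      omega
    have h2 : c * (a ^ i + 1) ≤ c * X := Nat.mul_le_mul_left _ hXbig
    have h3 : b * sF a i ≤ b * Yv := Nat.mul_le_mul_left _ hYc
    have h4 : c * (a ^ i + 1) = c * a ^ i + c := by ring
    omega
  · -- Yv < s_i : divisibility contradiction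
    have hYle : b * Yv ≤ b * sF a i := Nat.mul_le_mul_left _ hYc.le
    have hsplit : b * Yv + b * (sF a i - Yv) = b * sF a i := by
      rw [← Nat.mul_add, Nat.add_sub_cancel' hYc.le]
    have hXa : a ^ i ≤ X := by
      by_contra h
      push_neg at h
      have : c * X < c * a ^ i := Nat.mul_lt_mul_of_pos_left h (by omega)
      omega
    have hsplit2 : c * a ^ i + c * (X - a ^ i) = c * X := by
      rw [← Nat.mul_add, Nat.add_sub_cancel' hXa]
    have hkey : b * (sF a i - Yv) = c * (X - a ^ i) := by omega
    have hdvd : c ∣ b * (sF a i - Yv) := ⟨X - a ^ i, hkey⟩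
    have hcop' : Nat.Coprime c b := Nat.coprime_comm.mp hcop
    have hdvd2 : c ∣ (sF a i - Yv) := hcop'.dvd_of_dvd_mul_left hdvd
    have hpos : 0 < sF a i - Yv := by omega
    have := Nat.le_of_dvd hpos hdvd2
    omega

/-- Any element of a closure is zero, a generator, or decomposable. -/
lemma extract (T' : Set ℕ) (x : ℕ) (hx : x ∈ AddSubmonoid.closure T') :
    x = 0 ∨ x ∈ T' ∨ ∃ y z, y ∈ AddSubmonoid.closure T' ∧ z ∈ AddSubmonoid.closure T' ∧
      y ≠ 0 ∧ z ≠ 0 ∧ x = y + z := by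
  induction hx using AddSubmonoid.closure_induction with
  | mem z hz => exact Or.inr (Or.inl hz)
  | zero => exact Or.inl rfl
  | add x y hxm hym ihx ihy =>
    rcases Nat.eq_zero_or_pos x with rfl | hx0
    · simpa using ihy
    rcases Nat.eq_zero_or_pos y with rfl | hy0
    · simpa using ihx
    · exact Or.inr (Or.inr ⟨x, y, hxm, hym, hx0.ne', hy0.ne', rfl⟩)

theorem stmt9 (a b c : ℕ) (ha : 0 < a) (hb : 0 < b) (hc : 2 ≤ c)
    (hcop : Nat.gcd b c = 1) (kt : ℕ) (hkt : kt = sInf {k : ℕ | c - 1 < sF a k}) :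
    (∃ T : Set ℕ, (AddSubmonoid.closure T : Set ℕ) = Gset a b c ∧
      (∀ T' ⊆ T, (AddSubmonoid.closure T' : Set ℕ) = Gset a b c → T' = T) ∧
      T.ncard = kt) ∧
    ∀ T : Set ℕ, (AddSubmonoid.closure T : Set ℕ) = Gset a b c →
      (∀ T' ⊆ T, (AddSubmonoid.closure T' : Set ℕ) = Gset a b c → T' = T) →
      T.ncard = kt := by
  have hne : {k : ℕ | c - 1 < sF a k}.Nonempty := ⟨c, by
    have := le_sF a ha c
    simp only [Set.mem_setOf_eq]; omega⟩
  have hktmem : c - 1 < sF a kt := by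
    have := Nat.sInf_mem hne
    rw [← hkt] at this
    exact this
  have hkt1 : 1 ≤ kt := by
    by_contra h
    push_neg at h
    have h0 : kt = 0 := by omega
    rw [h0] at hktmem
    simp [sF] at hktmem
  have hktc : c ≤ sF a kt := by omega
  have hsmall : ∀ i < kt, sF a i ≤ c - 1 := by
    intro i hi
    by_contra h
    push_neg at h
    have : kt ≤ i := hkt ▸ Nat.sInf_le h
    omega
  set T₀ : Set ℕ := (fun i => tF a b c i) '' Set.Iio kt with hT₀def
  have hT₀eq : T₀ = {x | ∃ i < kt, x = tF a b c i} := by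
    ext x
    simp only [hT₀def, Set.mem_image, Set.mem_Iio, Set.mem_setOf_eq]
    constructor
    · rintro ⟨i, hi, rfl⟩; exact ⟨i, hi, rfl⟩
    · rintro ⟨i, hi, rfl⟩; exact ⟨i, hi, rfl⟩
  have hcl : AddSubmonoid.closure T₀ = Hmon a b c := by
    rw [hT₀eq]
    apply le_antisymm
    · exact closure_le.2 (by rintro x ⟨i, hi, rfl⟩; exact subset_closure ⟨i, rfl⟩)
    · exact closure_le.2 (by rintro x ⟨k, rfl⟩; exact tmem a b c kt ha hc hkt1 hktc k)
  have hGH : Gset a b c = ↑(Hmon a b c) := gset_eq a b c ha hb hc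
  have hclset : (AddSubmonoid.closure T₀ : Set ℕ) = Gset a b c := by
    rw [hcl, hGH]
  -- every generating set contains T₀
  have hmemT : ∀ T' : Set ℕ, (AddSubmonoid.closure T' : Set ℕ) = Gset a b c → T₀ ⊆ T' := by
    intro T' hgen
    rintro x ⟨i, hi, rfl⟩
    have hti : tF a b c i ∈ (AddSubmonoid.closure T' : Set ℕ) := by
      rw [hgen, hGH]
      exact subset_closure ⟨i, rfl⟩
    rcases extract T' (tF a b c i) hti with h0 | hT | ⟨y, z, hym, hzm, hy0, hz0, hxyz⟩
    · exfalso; have := c_le_tF a b c ha i; omega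
    · exact hT
    · exfalso
      have hyH : y ∈ Hmon a b c := by
        have : y ∈ (AddSubmonoid.closure T' : Set ℕ) := hym
        rwa [hgen, hGH] at this
      have hzH : z ∈ Hmon a b c := by
        have : z ∈ (AddSubmonoid.closure T' : Set ℕ) := hzm
        rwa [hgen, hGH] at this
      exact indec a b c ha hb hc hcop i (hsmall i hi) ⟨y, hyH, z, hzH, hy0, hz0, hxyz⟩
  have hncard : T₀.ncard = kt := by
    rw [hT₀def, Set.ncard_image_of_injOn
      (Set.injOn_of_injective (tF_strictMono a b c ha hb).injective),
      ← Finset.coe_Iio, Set.ncard_coe_finset, Nat.card_Iio]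
  constructor
  · exact ⟨T₀, hclset, fun T' hsub hgen => subset_antisymm hsub (hmemT T' hgen), hncard⟩
  · intro T hgen hmin
    rw [← hmin T₀ (hmemT T hgen) hclset]
    exact hncard
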